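/- Let γ > 1, ψ(s) = s^{1-γ}, and let τ, τ̄, φ' be real numbers with τ, τ̄ > 0. Suppose |φ'/τ| ≤ M and |φ'/τ̄| ≤ M for some M > 0. Then |φ'·(ψ'(τ) - ψ'(τ̄) - ψ''(τ̄)(τ - τ̄))| ≤ C₁·(ψ(τ) - ψ(τ̄) - ψ'(τ̄)(τ - τ̄)) where C₁ = (γ+1)·2M (more precisely, C₁ depends only on γ and M). The key inequality used is |φ'/(λτ + (1-λ)τ̄)| ≤ max{|φ'/τ|, |φ'/τ̄|} ≤ 2M for λ ∈ [0,1]. -/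

import Mathlib

open Real

private lemma mono_Icc {f f' : ℝ → ℝ} {a b : ℝ} (ha : 0 < a) (hab : a ≤ b)
    (hd : ∀ t, 0 < t → HasDerivAt f (f' t) t)
    (h0 : ∀ t, a < t → t < b → 0 ≤ f' t) : f a ≤ f b := by
  have hm : MonotoneOn f (Set.Icc a b) := by
    apply monotoneOn_of_deriv_nonneg (convex_Icc a b)
    · intro t ht
      exact (hd t (lt_of_lt_of_le ha ht.1)).continuousAt.continuousWithinAt
    · intro t ht
      rw [interior_Icc] at ht
      exact ((hd t (ha.trans ht.1)).differentiableAt).differentiableWithinAt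
    · intro t ht
      rw [interior_Icc] at ht
      rw [(hd t (ha.trans ht.1)).deriv]
      exact h0 t ht.1 ht.2
  exact hm (Set.left_mem_Icc.2 hab) (Set.right_mem_Icc.2 hab) hab

private lemma anti_Icc {f f' : ℝ → ℝ} {a b : ℝ} (ha : 0 < a) (hab : a ≤ b)
    (hd : ∀ t, 0 < t → HasDerivAt f (f' t) t)
    (h0 : ∀ t, a < t → t < b → f' t ≤ 0) : f b ≤ f a := by
  have hm : AntitoneOn f (Set.Icc a b) := by
    apply antitoneOn_of_deriv_nonpos (convex_Icc a b)
    · intro t ht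
      exact (hd t (lt_of_lt_of_le ha ht.1)).continuousAt.continuousWithinAt
    · intro t ht
      rw [interior_Icc] at ht
      exact ((hd t (ha.trans ht.1)).differentiableAt).differentiableWithinAt
    · intro t ht
      rw [interior_Icc] at ht
      rw [(hd t (ha.trans ht.1)).deriv]
      exact h0 t ht.1 ht.2
  exact hm (Set.left_mem_Icc.2 hab) (Set.right_mem_Icc.2 hab) hab

/-- Key scalar inequality combining Bernoulli and AM-GM. -/
private lemma key_ineq (γ b t : ℝ) (hγ : 1 < γ) (hb : 0 < b) (ht : 0 < t) :
    (γ + 1) * t ^ (-γ) ≤ b ^ (-γ) + γ * b * t ^ (-γ - 1) := by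
  set v : ℝ := b / t with hv
  have hvpos : 0 < v := div_pos hb ht
  -- Bernoulli : (1/v)^γ ≥ 1 + γ (1/v - 1)
  have hber : 1 + γ * (1 / v - 1) ≤ (1 / v) ^ γ := by
    have h1v : 0 < 1 / v := by positivity
    have := one_add_mul_self_le_rpow_one_add (s := 1 / v - 1) (by linarith) hγ.le
    simpa using this
  have e1 : (1 / v) ^ γ = v ^ (-γ) := by
    rw [Real.rpow_neg hvpos.le, Real.div_rpow zero_le_one hvpos.le, Real.one_rpow, one_div]
  rw [e1] at hber
  have hv2 : 2 ≤ 1 / v + v := by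
    have h := sq_nonneg (v - 1)
    have hvv : v * v⁻¹ = 1 := mul_inv_cancel₀ hvpos.ne'
    rw [one_div]
    nlinarith [hvpos]
  have scal2 : γ + 1 ≤ v ^ (-γ) + γ * v := by nlinarith [hvpos, hber, hv2]
  have htg : (0:ℝ) < t ^ (-γ) := Real.rpow_pos_of_pos ht _
  have e2 : v ^ (-γ) * t ^ (-γ) = b ^ (-γ) := by
    rw [← Real.mul_rpow (le_of_lt hvpos) ht.le, hv, div_mul_cancel₀ _ ht.ne']
  have e3 : t ^ (-γ - 1) * t = t ^ (-γ) := by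
    have := Real.rpow_add_one ht.ne' (-γ - 1)
    rw [show -γ - 1 + 1 = -γ by ring] at this
    linarith [this]
  have hvt : v * t = b := div_mul_cancel₀ _ ht.ne'
  have hstep : (γ + 1) * t ^ (-γ) ≤ (v ^ (-γ) + γ * v) * t ^ (-γ) :=
    mul_le_mul_of_nonneg_right scal2 htg.le
  have e4 : γ * v * t ^ (-γ) = γ * b * t ^ (-γ - 1) := by
    rw [← hvt, ← e3]; ring
  calc (γ + 1) * t ^ (-γ) ≤ (v ^ (-γ) + γ * v) * t ^ (-γ) := hstep
    _ = v ^ (-γ) * t ^ (-γ) + γ * v * t ^ (-γ) := by ring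
    _ = b ^ (-γ) + γ * b * t ^ (-γ - 1) := by rw [e2, e4]

private lemma hdF (γ τb t : ℝ) (ht : 0 < t) :
    HasDerivAt (fun s : ℝ => s ^ (1 - γ) - τb ^ (1 - γ) - (1 - γ) * τb ^ (-γ) * (s - τb))
      ((1 - γ) * t ^ (-γ) - (1 - γ) * τb ^ (-γ)) t := by
  have h1 : HasDerivAt (fun s : ℝ => s ^ (1 - γ)) ((1 - γ) * t ^ (-γ)) t := by
    have := Real.hasDerivAt_rpow_const (x := t) (p := 1 - γ) (Or.inl ht.ne')
    rwa [show (1 - γ - 1 : ℝ) = -γ by ring] at this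
  have h2 : HasDerivAt (fun s : ℝ => (1 - γ) * τb ^ (-γ) * (s - τb)) ((1 - γ) * τb ^ (-γ)) t := by
    simpa using ((hasDerivAt_id t).sub_const τb).const_mul ((1 - γ) * τb ^ (-γ))
  exact (h1.sub_const (τb ^ (1 - γ))).sub h2

private lemma hdG (γ τb t : ℝ) (ht : 0 < t) :
    HasDerivAt (fun s : ℝ => (1 - γ) * s ^ (-γ) - (1 - γ) * τb ^ (-γ)
        - γ * (γ - 1) * τb ^ (-γ - 1) * (s - τb))
      (γ * (γ - 1) * t ^ (-γ - 1) - γ * (γ - 1) * τb ^ (-γ - 1)) t := by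
  have h1 : HasDerivAt (fun s : ℝ => (1 - γ) * s ^ (-γ)) ((1 - γ) * (-γ * t ^ (-γ - 1))) t :=
    (Real.hasDerivAt_rpow_const (x := t) (p := -γ) (Or.inl ht.ne')).const_mul (1 - γ)
  have h2 : HasDerivAt (fun s : ℝ => γ * (γ - 1) * τb ^ (-γ - 1) * (s - τb))
      (γ * (γ - 1) * τb ^ (-γ - 1)) t := by
    simpa using ((hasDerivAt_id t).sub_const τb).const_mul (γ * (γ - 1) * τb ^ (-γ - 1))
  have h3 := (h1.sub_const ((1 - γ) * τb ^ (-γ))).sub h2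
  refine h3.congr_deriv ?_
  ring

/-- The first-derivative Taylor remainder of `ψ(s) = s^{1-γ}` multiplied by `φ'` is bounded by
`(γ+1)·2M` times the zeroth-order Taylor remainder, when `|φ'/τ|, |φ'/τ̄| ≤ M`. -/
theorem stmt_7 (γ τ τb φ' M : ℝ) (hγ : 1 < γ) (hτ : 0 < τ) (hτb : 0 < τb)
    (hM : 0 < M) (h1 : |φ' / τ| ≤ M) (h2 : |φ' / τb| ≤ M) :
    |φ' * ((1 - γ) * τ ^ (-γ) - (1 - γ) * τb ^ (-γ)
        - (γ * (γ - 1) * τb ^ (-γ - 1)) * (τ - τb))|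
      ≤ (γ + 1) * (2 * M) *
        (τ ^ (1 - γ) - τb ^ (1 - γ) - ((1 - γ) * τb ^ (-γ)) * (τ - τb)) := by
  -- abbreviations
  set F : ℝ → ℝ := fun s => s ^ (1 - γ) - τb ^ (1 - γ) - (1 - γ) * τb ^ (-γ) * (s - τb) with hFdef
  set G : ℝ → ℝ := fun s => (1 - γ) * s ^ (-γ) - (1 - γ) * τb ^ (-γ)
      - γ * (γ - 1) * τb ^ (-γ - 1) * (s - τb) with hGdef
  have hFb : F τb = 0 := by simp [hFdef]
  have hGb : G τb = 0 := by simp [hGdef]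
  have eτb : τb ^ (-γ - 1) * τb = τb ^ (-γ) := by
    have := Real.rpow_add_one hτb.ne' (-γ - 1)
    rw [show -γ - 1 + 1 = -γ by ring] at this
    linarith [this]
  -- |φ'| bounds
  have hφτ : |φ'| ≤ M * τ := by
    rw [abs_div, abs_of_pos hτ] at h1
    calc |φ'| = |φ'| / τ * τ := by field_simp
      _ ≤ M * τ := mul_le_mul_of_nonneg_right h1 hτ.le
  have hφτb : |φ'| ≤ M * τb := by
    rw [abs_div, abs_of_pos hτb] at h2
    calc |φ'| = |φ'| / τb * τb := by field_simp
      _ ≤ M * τb := mul_le_mul_of_nonneg_right h2 hτb.le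
  -- main facts: F τ ≥ 0, G τ ≤ 0, (min τ τb) * (-G τ) ≤ (γ+1) * F τ
  have main : 0 ≤ F τ ∧ G τ ≤ 0 ∧ (γ + 1) * F τ + min τ τb * G τ ≥ 0 := by
    rcases le_total τb τ with hc | hc
    · -- τb ≤ τ
      have hmin : min τ τb = τb := min_eq_right hc
      have hF : F τb ≤ F τ := by
        apply mono_Icc hτb hc (fun t ht => hdF γ τb t ht)
        intro t ht1 ht2
        have h := Real.rpow_le_rpow_of_nonpos hτb ht1.le (by linarith : -γ ≤ 0)
        nlinarith [h]
      have hG : G τ ≤ G τb := by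
        apply anti_Icc hτb hc (fun t ht => hdG γ τb t ht)
        intro t ht1 ht2
        have h := Real.rpow_le_rpow_of_nonpos hτb ht1.le (by linarith : -γ - 1 ≤ 0)
        have h2 := mul_le_mul_of_nonneg_left h (show (0:ℝ) ≤ γ * (γ - 1) by nlinarith)
        linarith
      have hK : (γ + 1) * F τb + τb * G τb ≤ (γ + 1) * F τ + τb * G τ := by
        apply mono_Icc (f := fun s => (γ + 1) * F s + τb * G s)
            (f' := fun t => (γ + 1) * ((1 - γ) * t ^ (-γ) - (1 - γ) * τb ^ (-γ))
            + τb * (γ * (γ - 1) * t ^ (-γ - 1) - γ * (γ - 1) * τb ^ (-γ - 1))) hτb hc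
        · intro t ht
          exact ((hdF γ τb t ht).const_mul (γ + 1)).add ((hdG γ τb t ht).const_mul τb)
        · intro t ht1 ht2
          have ht : 0 < t := hτb.trans ht1
          have hk := key_ineq γ τb t hγ hτb ht
          have key' := mul_le_mul_of_nonneg_left (sub_nonneg.mpr hk)
            (show (0:ℝ) ≤ γ - 1 by linarith)
          have heb2 : γ * (γ - 1) * (τb ^ (-γ - 1) * τb) = γ * (γ - 1) * τb ^ (-γ) := by
            rw [eτb]
          nlinarith [key', heb2]
      rw [hmin]
      refine ⟨by linarith [hF, hFb], by linarith [hG, hGb], by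
        rw [hFb, hGb] at hK; linarith [hK]⟩
    · -- τ ≤ τb
      have hmin : min τ τb = τ := min_eq_left hc
      have hF : F τb ≤ F τ := by
        apply anti_Icc hτ hc (fun t ht => hdF γ τb t ht)
        intro t ht1 ht2
        have h := Real.rpow_le_rpow_of_nonpos (hτ.trans ht1) ht2.le (by linarith : -γ ≤ 0)
        nlinarith [h]
      have hG : G τ ≤ G τb := by
        apply mono_Icc hτ hc (fun t ht => hdG γ τb t ht)
        intro t ht1 ht2
        have h := Real.rpow_le_rpow_of_nonpos (hτ.trans ht1) ht2.le (by linarith : -γ - 1 ≤ 0)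
        have h2 := mul_le_mul_of_nonneg_left h (show (0:ℝ) ≤ γ * (γ - 1) by nlinarith)
        linarith
      have hL : (γ + 1) * F τb + τb * G τb ≤ (γ + 1) * F τ + τ * G τ := by
        have hd : ∀ t, 0 < t → HasDerivAt (fun s => (γ + 1) * F s + s * G s)
            ((γ + 1) * ((1 - γ) * t ^ (-γ) - (1 - γ) * τb ^ (-γ))
              + (G t + t * (γ * (γ - 1) * t ^ (-γ - 1) - γ * (γ - 1) * τb ^ (-γ - 1)))) t := by
          intro t ht
          have h := ((hdF γ τb t ht).const_mul (γ + 1)).add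
            ((hasDerivAt_id t).mul (hdG γ τb t ht))
          refine h.congr_deriv ?_
          simp [hGdef]
        apply anti_Icc hτ hc hd
        intro t ht1 ht2
        have ht : 0 < t := hτ.trans ht1
        have hk := key_ineq γ t τb hγ ht hτb
        have et : t ^ (-γ - 1) * t = t ^ (-γ) := by
          have := Real.rpow_add_one ht.ne' (-γ - 1)
          rw [show -γ - 1 + 1 = -γ by ring] at this
          linarith [this]
        have key' := mul_le_mul_of_nonneg_left (sub_nonneg.mpr hk)
          (show (0:ℝ) ≤ 2 * (γ - 1) by linarith)
        have het2 : γ * (γ - 1) * (t ^ (-γ - 1) * t) = γ * (γ - 1) * t ^ (-γ) := by rw [et]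
        have heb2 : γ * (γ - 1) * (τb ^ (-γ - 1) * τb) = γ * (γ - 1) * τb ^ (-γ) := by rw [eτb]
        simp only [hGdef]
        nlinarith [key', het2, heb2]
      rw [hmin]
      rw [hFb, hGb] at hL
      refine ⟨by linarith [hF, hFb], by linarith [hG, hGb], by linarith [hL]⟩
  obtain ⟨hF0, hG0, hmain⟩ := main
  have hGτ : |φ' * G τ| = |φ'| * (-G τ) := by
    rw [abs_mul, abs_of_nonpos hG0]
  have hminpos : 0 < min τ τb := lt_min hτ hτb
  have hφmin : |φ'| ≤ M * min τ τb := by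
    rcases le_total τ τb with h | h
    · rw [min_eq_left h]; exact hφτ
    · rw [min_eq_right h]; exact hφτb
  have step1 : |φ'| * (-G τ) ≤ M * min τ τb * (-G τ) :=
    mul_le_mul_of_nonneg_right hφmin (by linarith)
  have step2 : M * (min τ τb * (-G τ)) ≤ M * ((γ + 1) * F τ) :=
    mul_le_mul_of_nonneg_left (by linarith) hM.le
  calc |φ' * G τ| = |φ'| * (-G τ) := hGτ
    _ ≤ M * min τ τb * (-G τ) := step1
    _ ≤ M * ((γ + 1) * F τ) := by linarith [step2]
    _ ≤ (γ + 1) * (2 * M) * F τ := by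
        have h0 : 0 ≤ M * ((γ + 1) * F τ) :=
          mul_nonneg hM.le (mul_nonneg (by linarith) hF0)
        linarith
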